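/- Let Q be a finite connected graded quiver with grading period r = 0. Then the ℤ-covering quiver P of Q is isomorphic to the disjoint union of ℤ copies of Q: the connected components of P are P^j, j ∈ ℤ, where P^j is the component containing (i,j) for a fixed vertex i of Q, these components are pairwise distinct, and each is isomorphic to Q as an ungraded quiver. -/
import Mathlib


/-- A graded quiver: a quiver with each arrow assigned an integer degree. -/
structure GradedQuiver where
  V : Type
  Arr : V → V → Type
  deg : ∀ {a b : V}, Arr a b → ℤ

namespace GradedQuiver

variable (Q : GradedQuiver)

/-- Paths: composable sequences of arrows (including trivial paths). -/
inductive Path : Q.V → Q.V → Type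
  | nil (a : Q.V) : Path a a
  | cons {a b c : Q.V} (p : Path a b) (e : Q.Arr b c) : Path a c

/-- The length of a path. -/
def Path.length {Q : GradedQuiver} : ∀ {a b : Q.V}, Q.Path a b → ℕ
  | _, _, .nil _ => 0
  | _, _, .cons p _ => p.length + 1

/-- The virtual degree of a path: the sum of `d(α) = 1 - |α|` over its arrows. -/
def Path.vdeg {Q : GradedQuiver} : ∀ {a b : Q.V}, Q.Path a b → ℤ
  | _, _, .nil _ => 0
  | _, _, .cons p e => p.vdeg + (1 - Q.deg e)

/-- The degree of a path: the sum of the degrees of its arrows. -/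
def Path.degree {Q : GradedQuiver} : ∀ {a b : Q.V}, Q.Path a b → ℤ
  | _, _, .nil _ => 0
  | _, _, .cons p e => p.degree + Q.deg e

/-- Walks: formal composites of arrows and formal inverses of arrows with
matching endpoints. -/
inductive Walk : Q.V → Q.V → Type
  | nil (a : Q.V) : Walk a a
  | consArr {a b c : Q.V} (w : Walk a b) (e : Q.Arr b c) : Walk a c
  | consInv {a b c : Q.V} (w : Walk a b) (e : Q.Arr c b) : Walk a c

/-- The virtual degree of a walk: `d(α) = 1 - |α|` for each arrow letter,
`-(1 - |α|)` for each inverse-arrow letter. -/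
def Walk.vdeg {Q : GradedQuiver} : ∀ {a b : Q.V}, Q.Walk a b → ℤ
  | _, _, .nil _ => 0
  | _, _, .consArr w e => w.vdeg + (1 - Q.deg e)
  | _, _, .consInv w e => w.vdeg - (1 - Q.deg e)

/-- `r` is the grading period of `Q`: it is `0` if every closed walk has virtual
degree `0`, and otherwise the minimal positive integer occurring as the virtual
degree of some closed walk. -/
def IsGradingPeriod (r : ℕ) : Prop :=
  (r = 0 ∧ ∀ (a : Q.V) (w : Q.Walk a a), w.vdeg = 0) ∨
  (0 < r ∧ (∃ (a : Q.V) (w : Q.Walk a a), w.vdeg = (r : ℤ)) ∧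
    ∀ (a : Q.V) (w : Q.Walk a a), 0 < w.vdeg → (r : ℤ) ≤ w.vdeg)

/-- `Q` is connected: any two vertices are joined by a walk. -/
def Connected : Prop := ∀ a b : Q.V, Nonempty (Q.Walk a b)

/-- The ℤ-covering quiver `P` of `Q`: vertices are pairs `(i, j)`, `i ∈ Q₀`,
`j ∈ ℤ`, and arrows `(α, j) : (s α, j) → (t α, j + d α)` with `d α = 1 - |α|`.
It is regarded as a graded quiver concentrated in degree `0`. -/
def Cover : GradedQuiver where
  V := Q.V × ℤ
  Arr := fun x y => { e : Q.Arr x.1 y.1 // y.2 = x.2 + (1 - Q.deg e) }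
  deg := fun _ => 0

end GradedQuiver

namespace GradedQuiver

/-- The connected component of the ℤ-covering quiver `P` containing the vertex
`x0`, as a full subquiver: its vertices are the vertices of `P` joined to `x0` by a
walk. -/
def Component (Q : GradedQuiver) (x0 : Q.Cover.V) : GradedQuiver where
  V := { x : Q.Cover.V // Nonempty (Q.Cover.Walk x0 x) }
  Arr := fun a b => Q.Cover.Arr a.val b.val
  deg := fun _ => 0

end GradedQuiver

/-- An isomorphism of (the underlying ungraded) quivers: bijections on vertices and
on arrows commuting with the source and target maps. -/
structure QuivIso (Q₁ Q₂ : GradedQuiver) where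
  vEquiv : Q₁.V ≃ Q₂.V
  aEquiv : ∀ x y : Q₁.V, Q₁.Arr x y ≃ Q₂.Arr (vEquiv x) (vEquiv y)

namespace GradedQuiver

/-- Concatenation of walks. -/
def Walk.append {Q : GradedQuiver} : ∀ {a b c : Q.V}, Q.Walk a b → Q.Walk b c → Q.Walk a c
  | _, _, _, w, .nil _ => w
  | _, _, _, w, .consArr w' e => .consArr (w.append w') e
  | _, _, _, w, .consInv w' e => .consInv (w.append w') e

lemma Walk.vdeg_append {Q : GradedQuiver} : ∀ {a b c : Q.V} (w : Q.Walk a b) (w' : Q.Walk b c),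
    (w.append w').vdeg = w.vdeg + w'.vdeg
  | _, _, _, _, .nil _ => by simp [Walk.append, Walk.vdeg]
  | _, _, _, w, .consArr w' e => by
      simp [Walk.append, Walk.vdeg, Walk.vdeg_append w w']; ring
  | _, _, _, w, .consInv w' e => by
      simp [Walk.append, Walk.vdeg, Walk.vdeg_append w w']; ring

/-- Reversal of a walk (existence form, with negated virtual degree). -/
lemma Walk.exists_reverse {Q : GradedQuiver} : ∀ {a b : Q.V} (w : Q.Walk a b),
    ∃ w' : Q.Walk b a, w'.vdeg = -w.vdeg
  | _, _, .nil a => ⟨.nil a, by simp [Walk.vdeg]⟩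
  | _, _, .consArr w e => by
      obtain ⟨w', hw'⟩ := Walk.exists_reverse w
      exact ⟨(Walk.consInv (.nil _) e).append w', by
        simp only [Walk.vdeg_append, Walk.vdeg, hw']; ring⟩
  | _, _, .consInv w e => by
      obtain ⟨w', hw'⟩ := Walk.exists_reverse w
      exact ⟨(Walk.consArr (.nil _) e).append w', by
        simp only [Walk.vdeg_append, Walk.vdeg, hw']; ring⟩

/-- Lifting a walk in `Q` to the cover. -/
lemma exists_lift {Q : GradedQuiver} : ∀ {a b : Q.V} (w : Q.Walk a b) (j k : ℤ),
    k = j + w.vdeg → Nonempty (Q.Cover.Walk (a, j) (b, k))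
  | _, _, .nil a, j, k, h => by
      have : k = j := by simpa [Walk.vdeg] using h
      subst this; exact ⟨.nil _⟩
  | _, _, .consArr w e, j, k, h => by
      obtain ⟨W⟩ := exists_lift w j (j + w.vdeg) rfl
      refine ⟨W.consArr (⟨e, ?_⟩ : Q.Cover.Arr _ ((_, k) : Q.Cover.V))⟩
      simp only [Walk.vdeg] at h; simp; omega
  | _, _, .consInv w e, j, k, h => by
      obtain ⟨W⟩ := exists_lift w j (j + w.vdeg) rfl
      refine ⟨W.consInv (⟨e, ?_⟩ : Q.Cover.Arr ((_, k) : Q.Cover.V) _)⟩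
      simp only [Walk.vdeg] at h; simp; omega

/-- Projecting a walk in the cover down to `Q`. -/
lemma exists_proj {Q : GradedQuiver} : ∀ {x y : Q.Cover.V} (W : Q.Cover.Walk x y),
    ∃ w : Q.Walk x.1 y.1, w.vdeg = y.2 - x.2
  | _, _, .nil a => ⟨.nil _, by simp [Walk.vdeg]⟩
  | _, _, .consArr W e => by
      obtain ⟨w, hw⟩ := exists_proj W
      exact ⟨w.consArr e.1, by simp only [Walk.vdeg, hw]; have := e.2; omega⟩
  | _, _, .consInv W e => by
      obtain ⟨w, hw⟩ := exists_proj W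
      exact ⟨w.consInv e.1, by simp only [Walk.vdeg, hw]; have := e.2; omega⟩

end GradedQuiver

/-- let `Q` be a finite connected graded quiver with grading period
`0` and fixed vertex `i`. Then the ℤ-covering quiver `P` is the disjoint union of ℤ
copies of `Q`: every vertex of `P` lies in the component `P^j` of `(i,j)` for some
`j ∈ ℤ`, these components are pairwise distinct, and each of them is isomorphic to
`Q` as an ungraded quiver. -/
theorem stmt_12 (Q : GradedQuiver) (hV : Finite Q.V) (hA : ∀ a b : Q.V, Finite (Q.Arr a b))
    (hconn : Q.Connected) (hper : Q.IsGradingPeriod 0) (i : Q.V) :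
    (∀ x : Q.Cover.V, ∃ j : ℤ, Nonempty (Q.Cover.Walk (i, j) x)) ∧
    (∀ j j' : ℤ, Nonempty (Q.Cover.Walk (i, j) (i, j')) → j = j') ∧
    (∀ j : ℤ, Nonempty (QuivIso (GradedQuiver.Component Q (i, j)) Q)) := by
  classical
  open GradedQuiver in
  -- extract: every closed walk has vdeg 0
  have hzero : ∀ (a : Q.V) (w : Q.Walk a a), w.vdeg = 0 := by
    rcases hper with ⟨_, h⟩ | ⟨h, _, _⟩
    · exact h
    · exact absurd h (lt_irrefl 0)
  -- canonical degree function
  let f : Q.V → ℤ := fun a => (hconn i a).some.vdeg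
  have hf : ∀ (a : Q.V) (w : Q.Walk i a), w.vdeg = f a := by
    intro a w
    obtain ⟨w', hw'⟩ := GradedQuiver.Walk.exists_reverse (hconn i a).some
    have := hzero i (w.append w')
    rw [GradedQuiver.Walk.vdeg_append, hw'] at this
    simp only [f]; omega
  refine ⟨?_, ?_, ?_⟩
  · rintro ⟨a, k⟩
    obtain ⟨w⟩ := hconn i a
    exact ⟨k - w.vdeg, GradedQuiver.exists_lift w _ k (by ring)⟩
  · rintro j j' ⟨W⟩
    obtain ⟨w, hw⟩ := GradedQuiver.exists_proj W
    have := hzero i w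
    simp only [this] at hw; omega
  · intro j
    -- vertices of the component have determined second coordinate
    have hcoord : ∀ x : (GradedQuiver.Component Q (i, j)).V, x.val.2 = j + f x.val.1 := by
      rintro ⟨x, ⟨W⟩⟩
      obtain ⟨w, hw⟩ := GradedQuiver.exists_proj W
      have := hf x.1 w
      show x.2 = j + f x.1
      simp at hw; omega
  -- arrow degree relation
    have harr : ∀ (a b : Q.V) (e : Q.Arr a b), f b = f a + (1 - Q.deg e) := by
      intro a b e
      obtain ⟨w⟩ := hconn i a
      have h1 := hf a w
      have h2 := hf b (w.consArr e)
      simp only [GradedQuiver.Walk.vdeg] at h2; omega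
    refine ⟨⟨?_, ?_⟩⟩
    · exact
        { toFun := fun x => x.val.1
          invFun := fun a => ⟨(a, j + f a),
            GradedQuiver.exists_lift (hconn i a).some j (j + f a)
              (by rw [hf a (hconn i a).some])⟩
          left_inv := by
            rintro ⟨⟨a, k⟩, hx⟩
            have h : k = j + f a := hcoord ⟨(a, k), hx⟩
            exact Subtype.ext (Prod.ext rfl h.symm)
          right_inv := fun a => rfl }
    · intro x y
      exact
        { toFun := fun e => e.val
          invFun := fun e => ⟨e, by
            have hx := hcoord x
            have hy := hcoord y
            have he := harr x.val.1 y.val.1 e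
            show y.val.2 = x.val.2 + (1 - Q.deg e)
            omega⟩
          left_inv := fun e => rfl
          right_inv := fun e => rfl }
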